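/- Let D be an integral domain with fraction field K and let A ∈ D^{n×n} admit a permutation-free LD⁻¹U decomposition A = L · D_g^{−1} · U. Then for all indices 1 ≤ j ≤ k ≤ n, the entry L_{kj} equals the determinant of the j×j matrix whose first j−1 rows are the entries A_{s,t} for 1 ≤ s ≤ j−1, 1 ≤ t ≤ j, and whose last row is (A_{k,1}, …, A_{k,j}); that is, L_{kj} is the j×j minor of A taken from rows 1,…,j−1,k and columns 1,…,j. -/

import Mathlib

/-- The diagonal matrix `D_g = diag(p₁, p₁p₂, p₂p₃, …, p_{n−1}p_n)` built from the
pivots `p : Fin n → D`. -/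
def bareissDiag {D : Type*} [CommRing D] {n : ℕ} (p : Fin n → D) :
    Matrix (Fin n) (Fin n) D :=
  Matrix.diagonal fun i =>
    (if (i : ℕ) = 0 then 1
      else p ⟨(i : ℕ) - 1, lt_of_le_of_lt (Nat.sub_le _ _) i.isLt⟩) * p i

/-- In a permutation-free `L D⁻¹ U` decomposition `A = L · D_g⁻¹ · U`
over the fraction field, for `j ≤ k` the entry `L k j` is the minor of `A` formed from
rows `0, …, j-1, k` and columns `0, …, j` (0-indexed). -/
theorem stmt3 {D K : Type*} [CommRing D] [IsDomain D] [Field K] [Algebra D K]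
    [IsFractionRing D K] {n : ℕ} (A L U : Matrix (Fin n) (Fin n) D)
    (hL : ∀ i j : Fin n, (i : ℕ) < (j : ℕ) → L i j = 0)
    (hU : ∀ i j : Fin n, (j : ℕ) < (i : ℕ) → U i j = 0)
    (hdiag : ∀ i : Fin n, U i i = L i i)
    (hp : ∀ i : Fin n, L i i ≠ 0)
    (hA : A.map (algebraMap D K) =
      L.map (algebraMap D K) *
        ((bareissDiag fun i : Fin n => L i i).map (algebraMap D K))⁻¹ *
        U.map (algebraMap D K))
    (k j : Fin n) (hjk : j ≤ k) :
    L k j = (Matrix.of fun s t : Fin ((j : ℕ) + 1) =>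
      A (if (s : ℕ) < (j : ℕ) then Fin.castLE j.isLt s else k)
        (Fin.castLE j.isLt t)).det := by
  classical
  have hfinj : Function.Injective (algebraMap D K) := IsFractionRing.injective D K
  set f := algebraMap D K with hf
  set g : Fin n → D := fun i =>
    (if (i : ℕ) = 0 then 1
      else L ⟨(i : ℕ) - 1, lt_of_le_of_lt (Nat.sub_le _ _) i.isLt⟩
        ⟨(i : ℕ) - 1, lt_of_le_of_lt (Nat.sub_le _ _) i.isLt⟩) * L i i with hg
  have hgne : ∀ i, f (g i) ≠ 0 := by
    intro i
    have h1 : g i ≠ 0 := by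
      apply mul_ne_zero _ (hp i)
      split
      · exact one_ne_zero
      · exact hp _
    exact fun h => h1 (hfinj (by simpa using h))
  -- inverse of the diagonal matrix
  have hDinv : ((bareissDiag fun i : Fin n => L i i).map f)⁻¹ =
      Matrix.diagonal fun i => (f (g i))⁻¹ := by
    apply Matrix.inv_eq_right_inv
    rw [bareissDiag, Matrix.diagonal_map (map_zero f), Matrix.diagonal_mul_diagonal,
      ← Matrix.diagonal_one]
    refine congrArg Matrix.diagonal (funext fun i => ?_)
    exact mul_inv_cancel₀ (hgne i)
  -- entrywise formula for A over K
  have hw : ∀ a b : Fin n,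
      f (A a b) = ∑ r : Fin n, f (L a r) * (f (g r))⁻¹ * f (U r b) := by
    intro a b
    have h := congrFun (congrFun hA a) b
    rw [hDinv] at h
    simpa [Matrix.mul_apply, Matrix.map_apply, Matrix.diagonal_apply, mul_ite, ite_mul,
      Finset.sum_ite_eq, Finset.sum_ite_eq'] using h
  set c : Fin ((j : ℕ) + 1) → Fin n := Fin.castLE j.isLt with hc
  have hcval : ∀ t : Fin ((j : ℕ) + 1), ((c t : Fin n) : ℕ) = (t : ℕ) := fun t => rfl
  -- sum restriction
  have hsum : ∀ (F : Fin n → K), (∀ r : Fin n, (j : ℕ) < (r : ℕ) → F r = 0) →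
      ∑ r : Fin n, F r = ∑ r : Fin ((j : ℕ) + 1), F (c r) := by
    intro F hF
    have hmap : ∑ r : Fin ((j : ℕ) + 1), F (c r)
        = ∑ x ∈ Finset.univ.map ⟨c, Fin.castLE_injective j.isLt⟩, F x := by
      rw [Finset.sum_map]
      rfl
    rw [hmap]
    refine (Finset.sum_subset (Finset.subset_univ _) ?_).symm
    intro x _ hx
    refine hF x ?_
    by_contra hlt
    push_neg at hlt
    exact hx (Finset.mem_map.2 ⟨⟨(x : ℕ), Nat.lt_succ_of_le hlt⟩, Finset.mem_univ _,
      Fin.ext rfl⟩)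
  set row : Fin ((j : ℕ) + 1) → Fin n :=
    fun s => if (s : ℕ) < (j : ℕ) then c s else k with hrow
  set L' : Matrix (Fin ((j : ℕ) + 1)) (Fin ((j : ℕ) + 1)) K :=
    Matrix.of fun s t => f (L (row s) (c t)) with hL'
  set U' : Matrix (Fin ((j : ℕ) + 1)) (Fin ((j : ℕ) + 1)) K :=
    Matrix.of fun s t => f (U (c s) (c t)) with hU'
  set E : Matrix (Fin ((j : ℕ) + 1)) (Fin ((j : ℕ) + 1)) K :=
    Matrix.diagonal fun r => (f (g (c r)))⁻¹ with hE
  have hM : ((Matrix.of fun s t : Fin ((j : ℕ) + 1) =>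
        A (if (s : ℕ) < (j : ℕ) then c s else k) (c t)).map f) = L' * E * U' := by
    ext s t
    show f (A (row s) (c t)) = _
    rw [hw (row s) (c t), hsum _ ?_]
    · rw [hE, hL', hU', Matrix.mul_apply]
      refine Finset.sum_congr rfl fun r _ => ?_
      rw [Matrix.mul_diagonal, Matrix.of_apply, Matrix.of_apply]
    · intro r hr
      have : U r (c t) = 0 := hU r (c t) (lt_of_le_of_lt (Nat.lt_succ_iff.mp t.isLt) hr)
      simp [this]
  -- determinants
  have hdetL' : L'.det = (∏ s : Fin (j : ℕ), f (L (c s.castSucc) (c s.castSucc))) *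
      f (L k j) := by
    rw [Matrix.det_of_lowerTriangular]
    · rw [Fin.prod_univ_castSucc]
      congr 1
      · apply Finset.prod_congr rfl
        intro s _
        have hs : ((s.castSucc : Fin ((j : ℕ) + 1)) : ℕ) < (j : ℕ) := s.isLt
        simp [hL', hrow, hs]
      · have hlast : ¬ ((Fin.last (j : ℕ) : ℕ) < (j : ℕ)) := by simp
        have hcl : c (Fin.last (j : ℕ)) = j := Fin.ext rfl
        simp [hL', hrow, hlast, hcl]
    · intro a b hab
      have hab' : (a : ℕ) < (b : ℕ) := hab
      have ha : (a : ℕ) < (j : ℕ) := lt_of_lt_of_le hab' (Nat.lt_succ_iff.mp b.isLt)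
      simp [hL', hrow, ha, hL (c a) (c b) hab']
  have hdetU' : U'.det = ∏ s : Fin ((j : ℕ) + 1), f (L (c s) (c s)) := by
    rw [Matrix.det_of_upperTriangular]
    · exact Finset.prod_congr rfl fun s _ => by simp [hU', hdiag]
    · intro a b hab
      simp [hU', hU (c a) (c b) hab]
  have hdetE : E.det = (∏ r : Fin ((j : ℕ) + 1), f (g (c r)))⁻¹ := by
    rw [hE, Matrix.det_diagonal, Finset.prod_inv_distrib]
  -- product identity for g
  have hgprod : ∏ r : Fin ((j : ℕ) + 1), f (g (c r)) =
      (∏ s : Fin (j : ℕ), f (L (c s.castSucc) (c s.castSucc))) *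
        ∏ s : Fin ((j : ℕ) + 1), f (L (c s) (c s)) := by
    have : ∀ r : Fin ((j : ℕ) + 1), f (g (c r)) =
        f ((if ((c r : Fin n) : ℕ) = 0 then 1
          else L ⟨((c r : Fin n) : ℕ) - 1, lt_of_le_of_lt (Nat.sub_le _ _) (c r).isLt⟩
            ⟨((c r : Fin n) : ℕ) - 1, lt_of_le_of_lt (Nat.sub_le _ _) (c r).isLt⟩))
          * f (L (c r) (c r)) := by
      intro r; exact map_mul f _ _
    rw [Finset.prod_congr rfl fun r _ => this r, Finset.prod_mul_distrib]
    congr 1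
    rw [Fin.prod_univ_succ]
    have h0 : ((c 0 : Fin n) : ℕ) = 0 := rfl
    rw [if_pos h0, map_one, one_mul]
    refine Finset.prod_congr rfl fun s _ => ?_
    have hsucc : ((c s.succ : Fin n) : ℕ) = (s : ℕ) + 1 := rfl
    rw [if_neg (show ¬ ((c s.succ : Fin n) : ℕ) = 0 by omega)]
    have harg : ∀ h : (((c s.succ : Fin n) : ℕ) - 1) < n,
        (⟨((c s.succ : Fin n) : ℕ) - 1, h⟩ : Fin n) = c s.castSucc :=
      fun h => Fin.ext (by simp [hsucc, hc])
    rw [harg]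
  -- conclude
  apply hfinj
  rw [RingHom.map_det, RingHom.mapMatrix_apply, hM, Matrix.det_mul, Matrix.det_mul, hdetL', hdetU', hdetE, hgprod]
  have hP1 : (∏ s : Fin (j : ℕ), f (L (c s.castSucc) (c s.castSucc))) ≠ 0 :=
    Finset.prod_ne_zero_iff.2 fun s _ => fun h => hp _ (hfinj (by simpa using h))
  have hP2 : (∏ s : Fin ((j : ℕ) + 1), f (L (c s) (c s))) ≠ 0 :=
    Finset.prod_ne_zero_iff.2 fun s _ => fun h => hp _ (hfinj (by simpa using h))
  field_simp
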